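/- For any positive integers n and λ, the number of proper λ-colorings of the cycle Γ_n that are fixed by the rotation r_m (i.e., f ∘ r_m = f) equals (λ−1)^k + (−1)^k (λ−1), where k = gcd(n,m), for n ≥ 3. -/

import Mathlib

section aux

variable (l : ℕ)

private lemma aux_path_card (k : ℕ) :
    Fintype.card {f : Fin (k+1) → Fin l // ∀ i : Fin k, f i.castSucc ≠ f i.succ}
      = l * (l-1)^k := by
  induction k with
  | zero =>
    have e : {f : Fin 1 → Fin l // ∀ i : Fin 0, f i.castSucc ≠ f i.succ} ≃ (Fin 1 → Fin l) :=
      Equiv.subtypeUnivEquiv (fun f i => i.elim0)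
    rw [Fintype.card_congr e]
    simp
  | succ k ih =>
    have e : {f : Fin (k+2) → Fin l // ∀ i : Fin (k+1), f i.castSucc ≠ f i.succ} ≃
        (p : {f : Fin (k+1) → Fin l // ∀ i : Fin k, f i.castSucc ≠ f i.succ}) ×
          {c : Fin l // c ≠ p.1 (Fin.last k)} :=
      { toFun := fun f => ⟨⟨Fin.init f.1, fun i => by
            have h := f.2 i.castSucc
            rw [Fin.succ_castSucc] at h
            simpa [Fin.init] using h⟩,
          ⟨f.1 (Fin.last (k+1)), by
            have h := f.2 (Fin.last k)
            rw [Fin.succ_last] at h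
            simpa [Fin.init] using h.symm⟩⟩
        invFun := fun p => ⟨Fin.snoc p.1.1 p.2.1, by
            intro i
            refine Fin.lastCases ?_ ?_ i
            · rw [Fin.succ_last, Fin.snoc_castSucc, Fin.snoc_last]
              exact fun h => p.2.2 h.symm
            · intro j
              rw [Fin.succ_castSucc, Fin.snoc_castSucc, Fin.snoc_castSucc]
              exact p.1.2 j⟩
        left_inv := fun f => Subtype.ext (by simp)
        right_inv := fun p => by
          refine Sigma.ext (Subtype.ext (by simp)) ?_
          refine (Subtype.heq_iff_coe_eq ?_).2 (by simp)
          intro c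
          simp }
    rw [Fintype.card_congr e, Fintype.card_sigma]
    have hfib : ∀ p : {f : Fin (k+1) → Fin l // ∀ i : Fin k, f i.castSucc ≠ f i.succ},
        Fintype.card {c : Fin l // c ≠ p.1 (Fin.last k)} = l - 1 := by
      intro p
      simp [Fintype.card_subtype_compl]
    simp only [hfib, Finset.sum_const, smul_eq_mul, Finset.card_univ, ih]
    ring

private lemma aux_card_split {α : Type*} [Fintype α] (p q : α → Prop)
    [DecidablePred p] [DecidablePred q] :
    Fintype.card {x // p x ∧ q x} + Fintype.card {x // p x ∧ ¬ q x}
      = Fintype.card {x // p x} := by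
  rw [Fintype.card_subtype, Fintype.card_subtype, Fintype.card_subtype,
    ← Finset.filter_filter, ← Finset.filter_filter]
  exact Finset.card_filter_add_card_filter_not _

private lemma aux_cyc_rec (k : ℕ) :
    Fintype.card {f : Fin (k+2) → Fin l //
        (∀ i : Fin (k+1), f i.castSucc ≠ f i.succ) ∧ f (Fin.last (k+1)) ≠ f 0}
      + Fintype.card {f : Fin (k+1) → Fin l //
        (∀ i : Fin k, f i.castSucc ≠ f i.succ) ∧ f (Fin.last k) ≠ f 0}
      = l * (l-1)^(k+1) := by
  classical
  have e : {f : Fin (k+2) → Fin l //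
      (∀ i : Fin (k+1), f i.castSucc ≠ f i.succ) ∧ ¬ (f (Fin.last (k+1)) ≠ f 0)} ≃
      {f : Fin (k+1) → Fin l //
      (∀ i : Fin k, f i.castSucc ≠ f i.succ) ∧ f (Fin.last k) ≠ f 0} :=
    { toFun := fun f => ⟨Fin.init f.1, fun i => by
          have h := f.2.1 i.castSucc
          rw [Fin.succ_castSucc] at h
          simpa [Fin.init] using h,
        by
          have h := f.2.1 (Fin.last k)
          have h2 := not_not.1 f.2.2
          rw [Fin.succ_last, h2] at h
          simpa [Fin.init] using h⟩
      invFun := fun g => ⟨Fin.snoc g.1 (g.1 0), by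
          constructor
          · intro i
            refine Fin.lastCases ?_ ?_ i
            · rw [Fin.succ_last, Fin.snoc_castSucc, Fin.snoc_last]
              exact g.2.2
            · intro j
              rw [Fin.succ_castSucc, Fin.snoc_castSucc, Fin.snoc_castSucc]
              exact g.2.1 j
          · rw [not_not, Fin.snoc_last, ← Fin.castSucc_zero (n := k+1), Fin.snoc_castSucc]⟩
      left_inv := fun f => Subtype.ext (by
        have h2 := not_not.1 f.2.2
        simp only [Fin.init_def]
        rw [show f.1 ((0 : Fin (k+1)).castSucc) = f.1 (Fin.last (k+1)) by
          rw [Fin.castSucc_zero, h2]]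
        exact Fin.snoc_init_self _)
      right_inv := fun g => Subtype.ext (by simp) }
  rw [← aux_path_card l (k+1),
    ← aux_card_split (fun f : Fin (k+2) → Fin l => ∀ i : Fin (k+1), f i.castSucc ≠ f i.succ)
      (fun f => f (Fin.last (k+1)) ≠ f 0)]
  rw [Fintype.card_congr e]

private lemma aux_cyc_card (hl : 0 < l) (k : ℕ) :
    (Fintype.card {f : Fin (k+1) → Fin l //
        (∀ i : Fin k, f i.castSucc ≠ f i.succ) ∧ f (Fin.last k) ≠ f 0} : ℤ)
      = ((l : ℤ) - 1)^(k+1) + (-1)^(k+1) * ((l : ℤ) - 1) := by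
  induction k with
  | zero =>
    have h0 : Fintype.card {f : Fin 1 → Fin l //
        (∀ i : Fin 0, f i.castSucc ≠ f i.succ) ∧ f (Fin.last 0) ≠ f 0} = 0 :=
      Fintype.card_eq_zero_iff.mpr ⟨fun f => f.2.2 rfl⟩
    rw [h0]
    push_cast
    ring
  | succ k ih =>
    have hrec := aux_cyc_rec l k
    have hcast : (Fintype.card {f : Fin (k+2) → Fin l //
        (∀ i : Fin (k+1), f i.castSucc ≠ f i.succ) ∧ f (Fin.last (k+1)) ≠ f 0} : ℤ)
        = (l : ℤ) * ((l : ℤ) - 1)^(k+1)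
          - (Fintype.card {f : Fin (k+1) → Fin l //
            (∀ i : Fin k, f i.castSucc ≠ f i.succ) ∧ f (Fin.last k) ≠ f 0} : ℤ) := by
      have := congrArg (fun x : ℕ => (x : ℤ)) hrec
      push_cast [Nat.cast_sub hl] at this
      linarith
    rw [hcast, ih, pow_succ ((l : ℤ) - 1) (k+1), pow_succ (-1 : ℤ) (k+1)]
    ring

private lemma aux_iff (j : ℕ) (f : Fin (j+1) → Fin l) :
    (∀ x : ZMod (j+1), f x ≠ f (x + (1 : ZMod (j+1))))
      ↔ ((∀ i : Fin j, f i.castSucc ≠ f i.succ) ∧ f (Fin.last j) ≠ f 0) := by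
  have hA : ∀ i : Fin j, (i.castSucc : Fin (j+1)) + 1 = i.succ := by
    intro i
    ext
    simp [Fin.add_def, Fin.val_one]
  have hB : (Fin.last j : Fin (j+1)) + 1 = 0 := by
    ext; simp [Fin.add_def, Fin.val_one]
  constructor
  · intro h
    have h' : ∀ x : Fin (j+1), f x ≠ f (x + 1) := h
    refine ⟨fun i => ?_, ?_⟩
    · have := h' i.castSucc
      rwa [hA i] at this
    · have := h' (Fin.last j)
      rwa [hB] at this
  · rintro ⟨h1, h2⟩
    have h' : ∀ x : Fin (j+1), f x ≠ f (x + 1) := by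
      intro x
      refine Fin.lastCases ?_ ?_ x
      · rwa [hB]
      · intro i
        rw [hA i]
        exact h1 i
    exact h'

private lemma aux_zmod_card (hl : 0 < l) (j : ℕ) :
    (Nat.card {g : ZMod (j+1) → Fin l // ∀ x : ZMod (j+1), g x ≠ g (x + 1)} : ℤ)
      = ((l : ℤ) - 1)^(j+1) + (-1)^(j+1) * ((l : ℤ) - 1) := by
  classical
  have e : {g : ZMod (j+1) → Fin l // ∀ x : ZMod (j+1), g x ≠ g (x + 1)} ≃
      {f : Fin (j+1) → Fin l //
        (∀ i : Fin j, f i.castSucc ≠ f i.succ) ∧ f (Fin.last j) ≠ f 0} :=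
    Equiv.subtypeEquivRight (p := fun f : Fin (j+1) → Fin l =>
      ∀ x : ZMod (j+1), f x ≠ f (x + (1 : ZMod (j+1)))) (fun f => aux_iff l j f)
  rw [Nat.card_congr e, Nat.card_eq_fintype_card]
  exact aux_cyc_card l hl j

end aux

/-- For `n ≥ 3` and `m < n`, the number of proper `l`-colorings of the cycle
`Γ_n` that are fixed by the rotation `r_m : v ↦ v + m` equals
`(l-1)^k + (-1)^k (l-1)` where `k = gcd(n,m)`. -/
theorem orbital_stmt16 (n m l : ℕ) (hn : 3 ≤ n) (hm : m < n) (hl : 0 < l) :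
    (Nat.card {f : ZMod n → Fin l //
        (∀ x : ZMod n, f x ≠ f (x + 1)) ∧ ∀ v : ZMod n, f (v + (m : ZMod n)) = f v} : ℤ) =
      ((l : ℤ) - 1) ^ Nat.gcd n m + (-1 : ℤ) ^ Nat.gcd n m * ((l : ℤ) - 1) := by
  classical
  have hn0 : NeZero n := ⟨by omega⟩
  set d := Nat.gcd n m with hdd
  have hd0 : 0 < d := Nat.gcd_pos_of_pos_left m (by omega)
  have hdneZero : NeZero d := ⟨by omega⟩
  have hdvdn : d ∣ n := Nat.gcd_dvd_left n m
  have hdvdm : d ∣ m := Nat.gcd_dvd_right n m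
  let cst : ZMod n →+* ZMod d := ZMod.castHom hdvdn (ZMod d)
  let F : {g : ZMod d → Fin l // ∀ x : ZMod d, g x ≠ g (x + 1)} →
      {f : ZMod n → Fin l //
        (∀ x : ZMod n, f x ≠ f (x + 1)) ∧ ∀ v : ZMod n, f (v + (m : ZMod n)) = f v} :=
    fun g => ⟨fun v => g.1 (cst v), by
      constructor
      · intro x
        show g.1 (cst x) ≠ g.1 (cst (x + 1))
        rw [map_add, map_one]
        exact g.2 (cst x)
      · intro v
        show g.1 (cst (v + (m : ZMod n))) = g.1 (cst v)
        have hm0 : cst ((m : ZMod n)) = 0 := by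
          rw [map_natCast, ZMod.natCast_eq_zero_iff]
          exact hdvdm
        rw [map_add, hm0, add_zero]⟩
  have hsec : ∀ w : ZMod d, cst ((w.val : ℕ) : ZMod n) = w := by
    intro w
    rw [map_natCast]
    exact ZMod.natCast_rightInverse w
  have hcstsurj : Function.Surjective cst :=
    fun w => ⟨((w.val : ℕ) : ZMod n), hsec w⟩
  have hFbij : Function.Bijective F := by
    constructor
    · intro g g' h
      apply Subtype.ext
      funext w
      obtain ⟨v, rfl⟩ := hcstsurj w
      exact congrFun (congrArg Subtype.val h) v
    · rintro ⟨f, hp, hinv⟩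
      -- invariance under integer multiples of m
      have hm1 : ∀ (z : ℤ) (v : ZMod n), f (v + (z : ZMod n) * (m : ZMod n)) = f v := by
        intro z
        induction z using Int.induction_on with
        | zero => intro v; simp
        | succ z ih =>
          intro v
          have h1 : (((z : ℤ) + 1 : ℤ) : ZMod n) * (m : ZMod n)
              = ((z : ℤ) : ZMod n) * (m : ZMod n) + (m : ZMod n) := by push_cast; ring
          rw [h1, ← add_assoc, hinv, ih]
        | pred z ih =>
          intro v
          have key := hinv (v + ((-(z : ℤ) - 1 : ℤ) : ZMod n) * (m : ZMod n))
          have e2 : v + ((-(z : ℤ) - 1 : ℤ) : ZMod n) * (m : ZMod n) + (m : ZMod n)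
              = v + ((-(z : ℤ) : ℤ) : ZMod n) * (m : ZMod n) := by push_cast; ring
          rw [e2] at key
          rw [← key]
          exact ih v
      -- invariance under adding d
      have hd1 : ∀ v : ZMod n, f (v + (d : ZMod n)) = f v := by
        intro v
        have hbez : (d : ℤ) = n * Nat.gcdA n m + m * Nat.gcdB n m := Nat.gcd_eq_gcd_ab n m
        have h1 : (d : ZMod n) = ((Nat.gcdB n m : ℤ) : ZMod n) * (m : ZMod n) := by
          have h2 := congrArg (fun z : ℤ => (z : ZMod n)) hbez
          push_cast at h2
          rw [ZMod.natCast_self] at h2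
          rw [h2]
          ring
        rw [h1]
        exact hm1 _ v
      -- invariance under adding natural multiples of d
      have hdc : ∀ (c : ℕ) (v : ZMod n), f (v + (d : ZMod n) * (c : ZMod n)) = f v := by
        intro c
        induction c with
        | zero => intro v; simp
        | succ c ih =>
          intro v
          have h1 : (d : ZMod n) * ((c + 1 : ℕ) : ZMod n)
              = (d : ZMod n) * (c : ZMod n) + (d : ZMod n) := by push_cast; ring
          rw [h1, ← add_assoc, hd1, ih]
      -- constancy on fibers of cst
      have hconst : ∀ x y : ZMod n, cst x = cst y → f x = f y := by
        intro x y hxy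
        have hz : cst (x - y) = 0 := by rw [map_sub, hxy, sub_self]
        have hx : x - y = (((x - y).val : ℕ) : ZMod n) := (ZMod.natCast_rightInverse _).symm
        have h0 : (((x - y).val : ℕ) : ZMod d) = 0 := by
          rw [← map_natCast cst, ← hx]; exact hz
        obtain ⟨c, hc⟩ := (ZMod.natCast_eq_zero_iff _ _).1 h0
        have hxy2 : x = y + (d : ZMod n) * (c : ZMod n) := by
          have h1 : x - y = ((d * c : ℕ) : ZMod n) := by rw [← hc, ← hx]
          push_cast at h1
          rw [← h1]
          ring
        rw [hxy2, hdc c y]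
      -- define the coloring downstairs
      refine ⟨⟨fun w => f ((w.val : ℕ) : ZMod n), ?_⟩, ?_⟩
      · intro w
        have hx := hp ((w.val : ℕ) : ZMod n)
        have h2 : f (((w.val : ℕ) : ZMod n) + 1) = f (((w + 1).val : ℕ) : ZMod n) := by
          apply hconst
          rw [map_add, map_one, hsec, hsec]
        rwa [h2] at hx
      · apply Subtype.ext
        funext v
        show f (((cst v).val : ℕ) : ZMod n) = f v
        apply hconst
        rw [hsec]
  rw [← Nat.card_eq_of_bijective F hFbij]
  obtain ⟨j, hj⟩ : ∃ j, d = j + 1 := ⟨d - 1, by omega⟩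
  rw [hj]
  exact aux_zmod_card l hl j
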